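/- Let X₁,…,Xₙ be real-valued random variables whose joint distribution under every P_θ, θ ∈ Θ, is exchangeable, and let E = E(X₁,…,Xₙ) be an e-variable for Θ₀. Then G := (1/n!) ∑_π E(X_{π(1)},…,X_{π(n)}) (average over all permutations π of {1,…,n}) is an e-variable for Θ₀, and for every concave utility f and θ ∈ Θ, E_θ[f(G)] ≥ E_θ[f(E)] whenever both expectations are defined. -/

import Mathlib

open MeasureTheory ENNReal Filter Set
open scoped Classical
noncomputable section

/-- The positive part of an extended real, as an extended nonnegative real. -/
def erealPos (a : EReal) : ℝ≥0∞ := if a = ⊤ then ⊤ else ENNReal.ofReal a.toReal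

/-- Generalized expectation `E[f] = E[f⁺] - E[f⁻]`, valued in the extended reals. -/
def eexp {Ω : Type*} {mΩ : MeasurableSpace Ω} (μ : Measure Ω) (f : Ω → EReal) : EReal :=
  ((∫⁻ ω, erealPos (f ω) ∂μ : ℝ≥0∞) : EReal) - ((∫⁻ ω, erealPos (-(f ω)) ∂μ : ℝ≥0∞) : EReal)

/-- The expectation of an extended-real random variable is (well-)defined when at least one of
the expectations of its positive and negative parts is finite. -/
def ExpDefined {Ω : Type*} {mΩ : MeasurableSpace Ω} (μ : Measure Ω) (f : Ω → EReal) : Prop :=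
  (∫⁻ ω, erealPos (f ω) ∂μ) < ⊤ ∨ (∫⁻ ω, erealPos (-(f ω)) ∂μ) < ⊤

/-- Logarithm on `[0,∞]`, with `log 0 = -∞` and `log ∞ = ∞`. -/
def elog (x : ℝ≥0∞) : EReal := if x = 0 then ⊥ else if x = ⊤ then ⊤ else ((Real.log x.toReal : ℝ) : EReal)

/-- Ratio on `[0,∞]` with the conventions `0/0 = 0` and `∞/∞ = 1`. -/
def eratio (a b : ℝ≥0∞) : ℝ≥0∞ := if a = ⊤ ∧ b = ⊤ then 1 else a / b

/-- `g` is a version of the conditional expectation of the nonnegative `h` given the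
sub-σ-field `m`, under the measure `μ`. -/
def IsCondExpNN {Ω : Type*} {mΩ : MeasurableSpace Ω} (m : MeasurableSpace Ω)
    (μ : @Measure Ω mΩ) (h g : Ω → ℝ≥0∞) : Prop :=
  Measurable[m] g ∧ ∀ A : Set Ω, MeasurableSet[m] A → ∫⁻ ω in A, g ω ∂μ = ∫⁻ ω in A, h ω ∂μ

/-- `g` is a universal (θ-free) version of the conditional expectation of `h` given `m`,
simultaneously under all measures `P θ`, `θ` ranging over a set `T` of parameters. -/
def IsUnivCondExpNN {Ω Θ : Type*} {mΩ : MeasurableSpace Ω} (m : MeasurableSpace Ω)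
    (P : Θ → @Measure Ω mΩ) (T : Set Θ) (h g : Ω → ℝ≥0∞) : Prop :=
  Measurable[m] g ∧ ∀ θ ∈ T, IsCondExpNN m (P θ) h g

/-- A sub-σ-field `m` is sufficient for the family `P` over the parameter set `T`:
every nonnegative measurable function admits a universal conditional expectation given `m`. -/
def IsSufficient {Ω Θ : Type*} {mΩ : MeasurableSpace Ω} (m : MeasurableSpace Ω)
    (P : Θ → @Measure Ω mΩ) (T : Set Θ) : Prop :=
  m ≤ mΩ ∧ ∀ h : Ω → ℝ≥0∞, Measurable[mΩ] h → ∃ g, IsUnivCondExpNN m P T h g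

/-- Kullback–Leibler divergence, valued in `[0,∞]` (as an extended real):
`∫ log(dμ/dν) dμ` when `μ ≪ ν`, and `+∞` otherwise. -/
def klDiv' {Ω : Type*} {mΩ : MeasurableSpace Ω} (μ ν : Measure Ω) : EReal :=
  if μ ≪ ν then eexp μ (fun ω => elog (μ.rnDeriv ν ω)) else ⊤

/-- `F : [0,∞] → [-∞,∞]` is the extension by limits of a concave utility `f : (0,∞) → ℝ`,
i.e. `F 0 = lim_{x↓0} f x`, `F ∞ = lim_{x→∞} f x`, and `F = f` in between. -/
def IsConcaveExtension (f : ℝ → ℝ) (F : ℝ≥0∞ → EReal) : Prop :=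
  ConcaveOn ℝ (Set.Ioi 0) f ∧
  (∀ x : ℝ≥0∞, x ≠ 0 → x ≠ ⊤ → F x = ((f x.toReal : ℝ) : EReal)) ∧
  Tendsto (fun x : ℝ => ((f x : ℝ) : EReal)) (nhdsWithin 0 (Set.Ioi 0)) (nhds (F 0)) ∧
  Tendsto (fun x : ℝ => ((f x : ℝ) : EReal)) atTop (nhds (F ⊤))


section RaoBlackwellAux

lemma erealPos_coe (r : ℝ) : erealPos (r : EReal) = ENNReal.ofReal r := by
  simp [erealPos]

lemma erealPos_neg_coe (r : ℝ) : erealPos (-(r : EReal)) = ENNReal.ofReal (-r) := by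
  rw [← EReal.coe_neg, erealPos_coe]

lemma erealPos_top : erealPos ⊤ = ⊤ := by simp [erealPos]
lemma erealPos_bot : erealPos ⊥ = 0 := by simp [erealPos]
lemma erealPos_neg_top : erealPos (-(⊤ : EReal)) = 0 := by simp [erealPos]
lemma erealPos_neg_bot : erealPos (-(⊥ : EReal)) = ⊤ := by simp [erealPos]

lemma measurable_erealPos : Measurable erealPos := by
  unfold erealPos
  refine Measurable.ite (MeasurableSet.singleton _) measurable_const ?_
  exact ENNReal.measurable_ofReal.comp measurable_ereal_toReal

lemma ofReal_posparts {r s : ℝ} (hrs : r ≤ s) :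
    ENNReal.ofReal r + ENNReal.ofReal (-s) ≤ ENNReal.ofReal s + ENNReal.ofReal (-r) := by
  rcases le_total r 0 with hr | hr <;> rcases le_total s 0 with hs | hs
  · rw [ENNReal.ofReal_of_nonpos hr, zero_add]
    exact le_add_left (ENNReal.ofReal_le_ofReal (by linarith))
  · rw [ENNReal.ofReal_of_nonpos hr, ENNReal.ofReal_of_nonpos (by linarith)]
    simp
  · have : r = 0 := le_antisymm (hrs.trans hs) hr
    have : s = 0 := le_antisymm hs (this ▸ hrs)
    simp_all
  · rw [ENNReal.ofReal_of_nonpos (neg_nonpos.mpr hs), ENNReal.ofReal_of_nonpos (neg_nonpos.mpr hr)]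
    simpa using ENNReal.ofReal_le_ofReal hrs

lemma pos_neg_parts {x y : EReal} (h : x ≤ y) :
    erealPos x + erealPos (-y) ≤ erealPos y + erealPos (-x) := by
  induction x using EReal.rec with
  | bot =>
    rw [erealPos_bot, erealPos_neg_bot, zero_add, add_top]
    exact le_top
  | top =>
    have : y = ⊤ := top_le_iff.mp h
    simp [this]
  | coe r =>
    induction y using EReal.rec with
    | bot => exact absurd h (by simp)
    | top => simp [erealPos_top]
    | coe s =>
      rw [erealPos_coe, erealPos_coe, erealPos_neg_coe, erealPos_neg_coe]
      exact ofReal_posparts (by exact_mod_cast h)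

lemma bdd_near_zero {f : ℝ → ℝ} (hconc : ConcaveOn ℝ (Set.Ioi 0) f) :
    ∀ x ∈ Set.Ioo (0:ℝ) 1, f x ≤ 2*|f 1| + 2*|f 2| := by
  intro x hx
  have h1 : (1:ℝ) ∈ Set.Ioi (0:ℝ) := by norm_num
  have h2 : (2:ℝ) ∈ Set.Ioi (0:ℝ) := by norm_num
  have hxm : x ∈ Set.Ioi (0:ℝ) := hx.1
  have h2x : (0:ℝ) < 2 - x := by linarith [hx.2]
  set t : ℝ := 1/(2-x) with htdef
  have ht : 0 ≤ t := by positivity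
  have ht1 : 0 ≤ 1 - t := by
    rw [sub_nonneg, htdef, div_le_one h2x]; linarith [hx.2]
  have hsum : t + (1 - t) = 1 := by ring
  have hcomb : t • x + (1-t) • (2:ℝ) = 1 := by
    simp only [smul_eq_mul, htdef]; field_simp; ring
  have hkey := hconc.2 hxm h2 ht ht1 hsum
  rw [hcomb] at hkey
  simp only [smul_eq_mul] at hkey
  have ht2 : 1/2 ≤ t := by rw [htdef, le_div_iff₀ h2x]; linarith [hx.1]
  rcases le_or_gt (f x) 0 with hfx | hfx
  · have : 0 ≤ |f 1| := abs_nonneg _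
    have : 0 ≤ |f 2| := abs_nonneg _
    linarith
  · have ha1 : f 1 ≤ |f 1| := le_abs_self _
    have ha2 : -|f 2| ≤ f 2 := neg_abs_le _
    have ha2' : f 2 ≤ |f 2| := le_abs_self _
    nlinarith [mul_le_mul_of_nonneg_right ht2 hfx.le, mul_le_mul_of_nonneg_left ha2 ht1,
      mul_le_mul_of_nonneg_left ha2' ht1]

lemma concave_le_of_tendsto_atTop {f : ℝ → ℝ} (hconc : ConcaveOn ℝ (Set.Ioi 0) f)
    {L : ℝ} (h : Tendsto f atTop (nhds L)) : ∀ x ∈ Set.Ioi (0:ℝ), f x ≤ L := by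
  by_contra hcon
  push_neg at hcon
  obtain ⟨x0, hx0, hLx0⟩ := hcon
  have hev : ∀ᶠ x in atTop, f x < f x0 := h.eventually_lt_const hLx0
  obtain ⟨x1, hfx1, hx1⟩ := (hev.and (eventually_ge_atTop (x0+1))).exists
  set d : ℝ := f x0 - f x1 with hddef
  have hd : 0 < d := by simp [hddef]; linarith
  have hx10 : (1:ℝ) ≤ x1 - x0 := by linarith
  have key : ∀ x, x1 < x → f x ≤ f x0 - d*(x - x0)/(x1 - x0) := by
    intro x hx
    have hxx0 : 0 < x - x0 := by linarith
    set t : ℝ := (x - x1)/(x - x0) with htdef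
    have ht : 0 ≤ t := div_nonneg (by linarith) hxx0.le
    have ht1 : 0 ≤ 1 - t := by
      rw [sub_nonneg, htdef, div_le_one hxx0]; linarith
    have hsum : t + (1 - t) = 1 := by ring
    have hcomb : t • x0 + (1-t) • x = x1 := by
      simp only [smul_eq_mul, htdef]; field_simp; ring
    have hkey := hconc.2 hx0 (show x ∈ Set.Ioi (0:ℝ) by simp only [Set.mem_Ioi] at hx0 ⊢; linarith) ht ht1 hsum
    rw [hcomb] at hkey
    simp only [smul_eq_mul] at hkey
    have hA : t * (x - x0) = x - x1 := div_mul_cancel₀ _ hxx0.ne'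
    have hB : (1 - t) * (x - x0) = x1 - x0 := by rw [sub_mul, one_mul, hA]; ring
    have hm := mul_le_mul_of_nonneg_right hkey hxx0.le
    have hm' : (x - x1) * f x0 + (x1 - x0) * f x ≤ f x1 * (x - x0) := by
      calc (x - x1) * f x0 + (x1 - x0) * f x
          = (t * f x0 + (1 - t) * f x) * (x - x0) := by rw [← hA, ← hB]; ring
        _ ≤ f x1 * (x - x0) := hm
    have h2' : (0:ℝ) < x1 - x0 := by linarith
    have hdiv : d * (x - x0) / (x1 - x0) ≤ f x0 - f x := by
      rw [div_le_iff₀ h2', hddef]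
      nlinarith [hm']
    linarith
  have hev2 : ∀ᶠ x in atTop, L - 1 < f x := h.eventually_const_lt (by linarith : L - 1 < L)
  have hev3 : ∀ᶠ x : ℝ in atTop, x1 < x := eventually_gt_atTop x1
  have hev4 : ∀ᶠ x : ℝ in atTop, x0 + (f x0 - L + 1)*(x1-x0)/d < x :=
    eventually_gt_atTop _
  obtain ⟨x, h2, h3, h4⟩ := (hev2.and (hev3.and hev4)).exists
  have hb := key x h3
  have h2' : (0:ℝ) < x1 - x0 := by linarith
  have h4a : (f x0 - L + 1)*(x1-x0)/d < x - x0 := by linarith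
  have h4' : (f x0 - L + 1)*(x1-x0) < d * (x - x0) := by
    have := (div_lt_iff₀ hd).mp h4a
    nlinarith [this]
  have : f x0 - d*(x - x0)/(x1 - x0) < L - 1 := by
    have : (f x0 - L + 1) < d * (x - x0) / (x1 - x0) := by
      rw [lt_div_iff₀ h2']
      exact h4'
    linarith
  linarith

variable {f : ℝ → ℝ} {F : ℝ≥0∞ → EReal}

lemma concave_contOn (hconc : ConcaveOn ℝ (Set.Ioi 0) f) : ContinuousOn f (Set.Ioi 0) := by
  have h := hconc.neg.continuousOn isOpen_Ioi
  simpa using h.neg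

lemma F_zero_ne_top (hF : IsConcaveExtension f F) : F 0 ≠ ⊤ := by
  set C : ℝ := 2*|f 1| + 2*|f 2| with hC
  have hev : ∀ᶠ x in nhdsWithin (0:ℝ) (Set.Ioi 0), ((f x : ℝ) : EReal) ≤ (C : EReal) := by
    filter_upwards [Ioo_mem_nhdsGT_of_mem (Set.left_mem_Ico.mpr zero_lt_one)] with x hx
    exact_mod_cast bdd_near_zero hF.1 x hx
  have hle : F 0 ≤ (C : EReal) := le_of_tendsto hF.2.2.1 hev
  intro h
  rw [h] at hle
  exact absurd hle (by simp)

lemma F_le_F_top (hF : IsConcaveExtension f F) {L : ℝ} (hL : F ⊤ = (L : ℝ)) (x : ℝ≥0∞) :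
    F x ≤ F ⊤ := by
  have hreal : Tendsto f atTop (nhds L) := by
    have h := hF.2.2.2
    rw [hL] at h
    exact EReal.tendsto_coe.mp h
  have hb := concave_le_of_tendsto_atTop hF.1 hreal
  rw [hL]
  by_cases hxt : x = ⊤
  · rw [hxt, hL]
  by_cases hx0 : x = 0
  · rw [hx0]
    refine le_of_tendsto hF.2.2.1 ?_
    filter_upwards [self_mem_nhdsWithin] with y hy
    exact_mod_cast hb y hy
  · rw [hF.2.1 x hx0 hxt]
    exact_mod_cast hb x.toReal (Set.mem_Ioi.mpr (ENNReal.toReal_pos hx0 hxt))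

lemma fext_concave (hF : IsConcaveExtension f F) {M : ℝ} (hM : F 0 = (M : ℝ)) :
    ConcaveOn ℝ (Set.Ici 0) (fun x => if x = 0 then M else f x) := by
  have hcont := concave_contOn hF.1
  have htend : Tendsto f (nhdsWithin 0 (Set.Ioi 0)) (nhds M) := by
    have h := hF.2.2.1
    rw [hM] at h
    exact EReal.tendsto_coe.mp h
  have key : ∀ y : ℝ, 0 < y → ∀ a b : ℝ, 0 ≤ a → 0 < b → a + b = 1 →
      a * M + b * f y ≤ f (b * y) := by
    intro y hy a b ha hb hab
    have hlim1 : Tendsto (fun ε => f (a*ε + b*y)) (nhdsWithin 0 (Set.Ioi 0)) (nhds (f (b*y))) := by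
      have hby : (0:ℝ) < b * y := by positivity
      have hc : ContinuousAt f (b*y) := hcont.continuousAt (Ioi_mem_nhds hby)
      have hmv : Tendsto (fun ε : ℝ => a*ε + b*y) (nhdsWithin 0 (Set.Ioi 0)) (nhds (b*y)) := by
        have : Tendsto (fun ε : ℝ => a*ε + b*y) (nhds 0) (nhds (a*0 + b*y)) := by
          exact ((continuous_const.mul continuous_id).add continuous_const).tendsto 0
        simpa using this.mono_left nhdsWithin_le_nhds
      exact hc.tendsto.comp hmv
    have hlim2 : Tendsto (fun ε => a * f ε + b * f y) (nhdsWithin 0 (Set.Ioi 0))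
        (nhds (a * M + b * f y)) := ((htend.const_mul a).add_const _)
    refine le_of_tendsto_of_tendsto hlim2 hlim1 ?_
    filter_upwards [self_mem_nhdsWithin, Ioo_mem_nhdsGT_of_mem
      (Set.left_mem_Ico.mpr zero_lt_one)] with ε hε _
    have := hF.1.2 hε (Set.mem_Ioi.mpr hy) ha hb.le hab
    simpa using this
  constructor
  · exact convex_Ici 0
  · intro x hx y hy a b ha hb hab
    simp only [smul_eq_mul]
    rcases eq_or_lt_of_le (Set.mem_Ici.mp hx) with hx0 | hx0 <;>
      rcases eq_or_lt_of_le (Set.mem_Ici.mp hy) with hy0 | hy0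
    · rw [← hx0, ← hy0]
      have heq : a * M + b * M = M := by
        have h2 : a * M + b * M = (a + b) * M := by ring
        rw [h2, hab, one_mul]
      simpa using le_of_eq heq
    · rcases eq_or_lt_of_le hb with hb0 | hb0
      · have ha1 : a = 1 := by linarith
        rw [← hx0, ← hb0, ha1]
        simp
      · have hcomb : a * x + b * y = b * y := by rw [← hx0]; ring
        rw [hcomb, if_neg (ne_of_gt (show (0:ℝ) < b * y by positivity)),
          if_pos hx0.symm, if_neg (ne_of_gt hy0)]
        exact key y hy0 a b ha hb0 hab
    · rcases eq_or_lt_of_le ha with ha0 | ha0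
      · have hb1 : b = 1 := by linarith
        rw [← hy0, ← ha0, hb1]
        simp
      · have hcomb : a * x + b * y = a * x := by rw [← hy0]; ring
        rw [hcomb, if_neg (ne_of_gt (show (0:ℝ) < a * x by positivity)),
          if_neg (ne_of_gt hx0), if_pos hy0.symm]
        have := key x hx0 b a hb ha0 (by linarith)
        linarith
    · have hcomb : (0:ℝ) < a * x + b * y := by
        rcases eq_or_lt_of_le ha with h | h
        · have hb1 : b = 1 := by linarith
          rw [← h, hb1]
          simpa using hy0
        · nlinarith [mul_pos h hx0, mul_nonneg hb hy0.le]
      rw [if_neg (ne_of_gt hcomb), if_neg (ne_of_gt hx0), if_neg (ne_of_gt hy0)]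
      have := hF.1.2 (Set.mem_Ioi.mpr hx0) (Set.mem_Ioi.mpr hy0) ha hb hab
      simpa using this

lemma measurable_F (hF : IsConcaveExtension f F) : Measurable F := by
  have hcont := concave_contOn hF.1
  have hcont2 : ContinuousOn F (({0, ⊤} : Set ℝ≥0∞)ᶜ) := by
    have h1 : ContinuousOn (fun x : ℝ≥0∞ => ((f x.toReal : ℝ) : EReal)) (({0, ⊤} : Set ℝ≥0∞)ᶜ) := by
      apply Continuous.comp_continuousOn continuous_coe_real_ereal
      apply hcont.comp ((ENNReal.continuousOn_toReal).mono ?_) ?_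
      · intro x hx
        simp only [Set.mem_compl_iff, Set.mem_insert_iff, Set.mem_singleton_iff, not_or] at hx
        exact hx.2
      · intro x hx
        simp only [Set.mem_compl_iff, Set.mem_insert_iff, Set.mem_singleton_iff, not_or] at hx
        exact Set.mem_Ioi.mpr (ENNReal.toReal_pos hx.1 hx.2)
    refine ContinuousOn.congr h1 ?_
    intro x hx
    simp only [Set.mem_compl_iff, Set.mem_insert_iff, Set.mem_singleton_iff, not_or] at hx
    exact hF.2.1 x hx.1 hx.2
  apply measurable_of_isOpen
  intro U hU
  obtain ⟨V, hV, hVeq⟩ := continuousOn_iff'.mp hcont2 U hU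
  have heq : F ⁻¹' U = (V ∩ (({0, ⊤} : Set ℝ≥0∞)ᶜ)) ∪ (F ⁻¹' U ∩ ({0, ⊤} : Set ℝ≥0∞)) := by
    rw [← hVeq]
    ext x
    by_cases hx : x ∈ ({0, ⊤} : Set ℝ≥0∞) <;> simp [hx] <;> tauto
  rw [heq]
  refine MeasurableSet.union (hV.measurableSet.inter ?_) ?_
  · exact (MeasurableSet.insert (measurableSet_singleton _) _).compl
  · exact ((Set.finite_singleton (⊤:ℝ≥0∞)).insert 0).subset Set.inter_subset_right |>.measurableSet

lemma eexp_le_of_parts {Ap An Bp Bn : ℝ≥0∞} (hA : Ap < ⊤ ∨ An < ⊤) (hB : Bp < ⊤ ∨ Bn < ⊤)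
    (key : Ap + Bn ≤ Bp + An) : (Ap : EReal) - (An : EReal) ≤ (Bp : EReal) - (Bn : EReal) := by
  by_cases hAn : An = ⊤
  · have : (Ap : EReal) - (An : EReal) = ⊥ := by
      rw [hAn, EReal.coe_ennreal_top, sub_eq_add_neg, EReal.neg_top, EReal.add_bot]
    rw [this]; exact bot_le
  · have hBn : Bn ≠ ⊤ := by
      intro h
      rw [h, add_top] at key
      rcases ENNReal.add_eq_top.mp (top_le_iff.mp key) with h1 | h1
      · rcases hB with h2 | h2
        · exact absurd h1 h2.ne
        · exact absurd h h2.ne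
      · exact hAn h1
    by_cases hBp : Bp = ⊤
    · have : (Bp : EReal) - (Bn : EReal) = ⊤ := by
        rw [hBp, EReal.coe_ennreal_top, sub_eq_add_neg]
        apply EReal.top_add_of_ne_bot
        intro h
        exact hBn (EReal.coe_ennreal_eq_top_iff.mp (EReal.neg_eq_bot_iff.mp h))
      rw [this]; exact le_top
    · have hAp : Ap ≠ ⊤ := by
        intro h
        rw [h, top_add] at key
        rcases ENNReal.add_eq_top.mp (top_le_iff.mp key) with h1 | h1
        · exact hBp h1
        · exact hAn h1
      have key' : Ap.toReal + Bn.toReal ≤ Bp.toReal + An.toReal := by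
        rw [← ENNReal.toReal_add hAp hBn, ← ENNReal.toReal_add hBp hAn]
        exact ENNReal.toReal_mono (by simp [hBp, hAn]) key
      have e1 : ∀ x : ℝ≥0∞, x ≠ ⊤ → (x : EReal) = ((x.toReal : ℝ) : EReal) := by
        intro x hx
        rw [← EReal.coe_toReal (x := (x : EReal)) (by simpa [EReal.coe_ennreal_eq_top_iff] using hx)
          (EReal.coe_ennreal_ne_bot x),
          EReal.toReal_coe_ennreal]
      rw [e1 _ hAp, e1 _ hAn, e1 _ hBp, e1 _ hBn, ← EReal.coe_sub, ← EReal.coe_sub]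
      exact EReal.coe_le_coe_iff.mpr (by linarith)

lemma ofReal_max (x : ℝ) : ENNReal.ofReal x = ENNReal.ofReal (max x 0) := by
  rcases le_total x 0 with h | h
  · rw [ENNReal.ofReal_of_nonpos h, max_eq_right h, ENNReal.ofReal_zero]
  · rw [max_eq_left h]

lemma real_parts_sum {ι : Type*} [Fintype ι] (r : ι → ℝ) (s : ℝ) (N : ℕ)
    (h : ∑ i, r i ≤ N * s) :
    ∑ i, ENNReal.ofReal (r i) + (N : ℝ≥0∞) * ENNReal.ofReal (-s)
      ≤ (N : ℝ≥0∞) * ENNReal.ofReal s + ∑ i, ENNReal.ofReal (-(r i)) := by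
  have hsum1 : ∑ i, ENNReal.ofReal (r i) = ENNReal.ofReal (∑ i, max (r i) 0) := by
    rw [ENNReal.ofReal_sum_of_nonneg (fun i _ => le_max_right _ _)]
    exact Finset.sum_congr rfl fun i _ => (ofReal_max _)
  have hsum2 : ∑ i, ENNReal.ofReal (-(r i)) = ENNReal.ofReal (∑ i, max (-(r i)) 0) := by
    rw [ENNReal.ofReal_sum_of_nonneg (fun i _ => le_max_right _ _)]
    exact Finset.sum_congr rfl fun i _ => (ofReal_max _)
  have hmul : ∀ x : ℝ, (N : ℝ≥0∞) * ENNReal.ofReal x = ENNReal.ofReal ((N : ℝ) * max x 0) := by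
    intro x
    rw [ENNReal.ofReal_mul (by positivity), ENNReal.ofReal_natCast, _root_.ofReal_max x]
  rw [hsum1, hsum2, hmul, hmul, ← ENNReal.ofReal_add (by positivity) (by positivity),
    ← ENNReal.ofReal_add (by positivity) (by positivity)]
  apply ENNReal.ofReal_le_ofReal
  have hkey : ∀ x : ℝ, max x 0 - max (-x) 0 = x := by
    intro x
    rcases le_total x 0 with h | h
    · rw [max_eq_right h, max_eq_left (by linarith)]; ring
    · rw [max_eq_left h, max_eq_right (by linarith)]; ring
  have h1 : ∑ i, max (r i) 0 - ∑ i, max (-(r i)) 0 = ∑ i, r i := by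
    rw [← Finset.sum_sub_distrib]
    exact Finset.sum_congr rfl fun i _ => hkey _
  have h2 := hkey s
  nlinarith [h1, h2, h]

lemma jensen_parts {ι : Type*} [Fintype ι] [Nonempty ι] (hF : IsConcaveExtension f F)
    (a : ι → ℝ≥0∞) :
    ∑ i, erealPos (F (a i)) +
        (Fintype.card ι : ℝ≥0∞) * erealPos (-(F ((Fintype.card ι : ℝ≥0∞)⁻¹ * ∑ i, a i))) ≤
      (Fintype.card ι : ℝ≥0∞) * erealPos (F ((Fintype.card ι : ℝ≥0∞)⁻¹ * ∑ i, a i)) +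
        ∑ i, erealPos (-(F (a i))) := by
  have hN0 : (Fintype.card ι : ℝ≥0∞) ≠ 0 := Nat.cast_ne_zero.mpr Fintype.card_ne_zero
  have hNtop : (Fintype.card ι : ℝ≥0∞) ≠ ⊤ := ENNReal.natCast_ne_top _
  have hcardR : (Fintype.card ι : ℝ) ≠ 0 := Nat.cast_ne_zero.mpr Fintype.card_ne_zero
  set c : ℝ≥0∞ := (Fintype.card ι : ℝ≥0∞)⁻¹ * ∑ i, a i with hc
  by_cases htop : ∃ i, a i = ⊤
  · obtain ⟨i0, hi0⟩ := htop
    have hctop : c = ⊤ := by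
      rw [hc, ENNReal.sum_eq_top.mpr ⟨i0, Finset.mem_univ _, hi0⟩,
        ENNReal.mul_top (ENNReal.inv_ne_zero.mpr hNtop)]
    rw [hctop]
    by_cases hT : F ⊤ = ⊤
    · rw [hT, erealPos_top, ENNReal.mul_top hN0, top_add]
      exact le_top
    by_cases hBt : F ⊤ = ⊥
    · have : ∑ i, erealPos (-(F (a i))) = ⊤ :=
        ENNReal.sum_eq_top.mpr ⟨i0, Finset.mem_univ _, by rw [hi0, hBt, erealPos_neg_bot]⟩
      rw [this, add_top]
      exact le_top
    · have hL : F ⊤ = ((F ⊤).toReal : ℝ) := (EReal.coe_toReal hT hBt).symm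
      have hptwise : ∀ i, erealPos (F (a i)) + erealPos (-(F ⊤)) ≤
          erealPos (F ⊤) + erealPos (-(F (a i))) :=
        fun i => pos_neg_parts (F_le_F_top hF hL (a i))
      have hsum' := Finset.sum_le_sum (fun i (_ : i ∈ Finset.univ) => hptwise i)
      simpa only [Finset.sum_add_distrib, Finset.sum_const, Finset.card_univ, nsmul_eq_mul]
        using hsum'
  · push_neg at htop
    have hsumne : ∑ i, a i ≠ ⊤ := ENNReal.sum_ne_top.mpr fun i _ => htop i
    have hcne : c ≠ ⊤ := ENNReal.mul_ne_top (ENNReal.inv_ne_top.mpr hN0) hsumne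
    by_cases hall : ∀ i, a i = 0
    · have hc0 : c = 0 := by
        rw [hc, Finset.sum_congr rfl (fun i _ => hall i), Finset.sum_const, smul_zero, mul_zero]
      have h1 : ∑ i, erealPos (F (a i)) = (Fintype.card ι : ℝ≥0∞) * erealPos (F 0) := by
        rw [Finset.sum_congr rfl (fun i _ => by rw [hall i]), Finset.sum_const,
          Finset.card_univ, nsmul_eq_mul]
      have h2 : ∑ i, erealPos (-(F (a i))) = (Fintype.card ι : ℝ≥0∞) * erealPos (-(F 0)) := by
        rw [Finset.sum_congr rfl (fun i _ => by rw [hall i]), Finset.sum_const,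
          Finset.card_univ, nsmul_eq_mul]
      rw [hc0, h1, h2, add_comm]
    · push_neg at hall
      obtain ⟨i1, hi1⟩ := hall
      have hc0 : c ≠ 0 := by
        rw [hc]
        refine mul_ne_zero (ENNReal.inv_ne_zero.mpr hNtop) ?_
        intro h
        exact hi1 (Finset.sum_eq_zero_iff.mp h i1 (Finset.mem_univ _))
      have hcpos : 0 < c.toReal := ENNReal.toReal_pos hc0 hcne
      have hFc : F c = ((f c.toReal : ℝ) : EReal) := hF.2.1 c hc0 hcne
      have hcto : c.toReal = (Fintype.card ι : ℝ)⁻¹ * ∑ i, (a i).toReal := by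
        rw [hc, ENNReal.toReal_mul, ENNReal.toReal_inv, ENNReal.toReal_natCast,
          ENNReal.toReal_sum (fun i _ => htop i)]
      -- helper to conclude from real data
      have main : ∀ r : ι → ℝ, (∀ i, F (a i) = ((r i : ℝ) : EReal)) →
          (∑ i, r i ≤ (Fintype.card ι : ℝ) * f c.toReal) →
          ∑ i, erealPos (F (a i)) + (Fintype.card ι : ℝ≥0∞) * erealPos (-(F c)) ≤
            (Fintype.card ι : ℝ≥0∞) * erealPos (F c) + ∑ i, erealPos (-(F (a i))) := by
        intro r hr hsum
        have e1 : ∑ i, erealPos (F (a i)) = ∑ i, ENNReal.ofReal (r i) :=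
          Finset.sum_congr rfl fun i _ => by rw [hr i, erealPos_coe]
        have e2 : ∑ i, erealPos (-(F (a i))) = ∑ i, ENNReal.ofReal (-(r i)) :=
          Finset.sum_congr rfl fun i _ => by rw [hr i, erealPos_neg_coe]
        rw [e1, e2, hFc, erealPos_coe, erealPos_neg_coe]
        exact real_parts_sum r (f c.toReal) (Fintype.card ι) (by exact_mod_cast hsum)
      -- Jensen machinery shared
      have hw1 : ∑ _i : ι, (Fintype.card ι : ℝ)⁻¹ = 1 := by
        rw [Finset.sum_const, Finset.card_univ, nsmul_eq_mul, mul_inv_cancel₀ hcardR]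
      have hjensen : ∀ g : ℝ → ℝ,
          (∑ i : ι, (Fintype.card ι : ℝ)⁻¹ • g ((a i).toReal) ≤
            g (∑ i : ι, (Fintype.card ι : ℝ)⁻¹ • (a i).toReal)) →
          ∑ i, g ((a i).toReal) ≤ (Fintype.card ι : ℝ) * g c.toReal := by
        intro g hjen
        have hcombo : ∑ i : ι, (Fintype.card ι : ℝ)⁻¹ • (a i).toReal = c.toReal := by
          rw [hcto, Finset.mul_sum]
          simp [smul_eq_mul]
        rw [hcombo] at hjen
        simp only [smul_eq_mul, ← Finset.mul_sum] at hjen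
        have := mul_le_mul_of_nonneg_left hjen (Nat.cast_nonneg (Fintype.card ι) : (0:ℝ) ≤ _)
        rwa [← mul_assoc, mul_inv_cancel₀ hcardR, one_mul] at this
      by_cases hzero : ∃ i, a i = 0
      · by_cases hb0 : F 0 = ⊥
        · obtain ⟨i2, hi2⟩ := hzero
          have : ∑ i, erealPos (-(F (a i))) = ⊤ :=
            ENNReal.sum_eq_top.mpr ⟨i2, Finset.mem_univ _, by rw [hi2, hb0, erealPos_neg_bot]⟩
          rw [this, add_top]
          exact le_top
        · have hM' : F 0 = (((F 0).toReal : ℝ) : EReal) := (EReal.coe_toReal (F_zero_ne_top hF) hb0).symm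
          set M : ℝ := (F 0).toReal with hMdef
          set g : ℝ → ℝ := fun x => if x = 0 then M else f x with hg
          have hconc2 : ConcaveOn ℝ (Set.Ici 0) g := fext_concave hF hM'
          have hjen := hconc2.le_map_sum (t := Finset.univ)
            (w := fun _ => (Fintype.card ι : ℝ)⁻¹) (p := fun i => (a i).toReal)
            (fun i _ => by positivity) hw1 (fun i _ => Set.mem_Ici.mpr ENNReal.toReal_nonneg)
          have hsum2 := hjensen g hjen
          have hgc : g c.toReal = f c.toReal := if_neg (ne_of_gt hcpos)
          rw [hgc] at hsum2
          refine main (fun i => g ((a i).toReal)) (fun i => ?_) hsum2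
          show F (a i) = ((g ((a i).toReal) : ℝ) : EReal)
          by_cases hia : a i = 0
          · have h0 : g ((a i).toReal) = M := by rw [hia]; simp [hg]
            rw [h0, hia]
            exact hM'
          · have hto : (a i).toReal ≠ 0 := ENNReal.toReal_ne_zero.mpr ⟨hia, htop i⟩
            rw [hF.2.1 (a i) hia (htop i), hg]
            simp [hto]
      · push_neg at hzero
        have hjen := hF.1.le_map_sum (t := Finset.univ)
          (w := fun _ => (Fintype.card ι : ℝ)⁻¹) (p := fun i => (a i).toReal)
          (fun i _ => by positivity) hw1
          (fun i _ => Set.mem_Ioi.mpr (ENNReal.toReal_pos (hzero i) (htop i)))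
        have hsum2 := hjensen f hjen
        refine main (fun i => f ((a i).toReal)) (fun i => hF.2.1 (a i) (hzero i) (htop i)) hsum2

end RaoBlackwellAux

/-- Permutation (Rao–Blackwellization over the order statistics): if the data
`X : Ω → (Fin n → ℝ)` are exchangeable under every `P θ` and `E ∘ X` is an e-variable for
`Θ₀`, then `G := (1/n!) ∑_π E(X ∘ π)` is an e-variable for `Θ₀`, and for every concave
utility `F` and every `θ ∈ Θ`, `E_θ[F(G)] ≥ E_θ[F(E(X))]` whenever both expectations are
defined. -/
theorem rao_blackwell_stmt17
    {Ω Θ : Type*} {mΩ : MeasurableSpace Ω} (P : Θ → Measure Ω)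
    [∀ θ, IsProbabilityMeasure (P θ)]
    (Θ₀ Θ₁ : Set Θ) (hΘ : Θ₀ ∪ Θ₁ = Set.univ)
    (n : ℕ) (X : Ω → (Fin n → ℝ)) (hX : Measurable[mΩ] X)
    -- exchangeability under every `P θ`
    (hexch : ∀ θ : Θ, ∀ π : Equiv.Perm (Fin n),
      Measure.map (fun ω => fun i => X ω (π i)) (P θ) = Measure.map X (P θ))
    (E : (Fin n → ℝ) → ℝ≥0∞) (hE : Measurable E)
    (hEval : ∀ θ ∈ Θ₀, ∫⁻ ω, E (X ω) ∂(P θ) ≤ 1)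
    (G : Ω → ℝ≥0∞)
    (hG : ∀ ω, G ω = (n.factorial : ℝ≥0∞)⁻¹ *
      ∑ π : Equiv.Perm (Fin n), E (fun i => X ω (π i)))
    (f : ℝ → ℝ) (F : ℝ≥0∞ → EReal) (hF : IsConcaveExtension f F) :
    (∀ θ ∈ Θ₀, ∫⁻ ω, G ω ∂(P θ) ≤ 1) ∧
    (∀ θ : Θ,
      ExpDefined (P θ) (fun ω => F (E (X ω))) → ExpDefined (P θ) (fun ω => F (G ω)) →
        eexp (P θ) (fun ω => F (E (X ω))) ≤ eexp (P θ) (fun ω => F (G ω))) := by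
  have hFmeas : Measurable F := measurable_F hF
  have hXπ : ∀ π : Equiv.Perm (Fin n), Measurable (fun ω => fun i => X ω (π i)) :=
    fun π => measurable_pi_lambda _ fun i => (measurable_pi_apply (π i)).comp hX
  have hcard : (Fintype.card (Equiv.Perm (Fin n)) : ℝ≥0∞) = (n.factorial : ℝ≥0∞) := by
    rw [Fintype.card_perm, Fintype.card_fin]
  have hfac0 : (n.factorial : ℝ≥0∞) ≠ 0 := Nat.cast_ne_zero.mpr n.factorial_ne_zero
  have hfactop : (n.factorial : ℝ≥0∞) ≠ ⊤ := ENNReal.natCast_ne_top _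
  have hGmeas : Measurable G := by
    have hfun : G = fun ω => (n.factorial : ℝ≥0∞)⁻¹ *
        ∑ π : Equiv.Perm (Fin n), E (fun i => X ω (π i)) := funext hG
    rw [hfun]
    exact (Finset.measurable_sum _ fun π _ => hE.comp (hXπ π)).const_mul _
  constructor
  · intro θ hθ
    have hswap : ∀ π : Equiv.Perm (Fin n),
        ∫⁻ ω, E (fun i => X ω (π i)) ∂(P θ) = ∫⁻ ω, E (X ω) ∂(P θ) := fun π => by
      rw [← lintegral_map hE (hXπ π), hexch θ π, lintegral_map hE hX]
    calc ∫⁻ ω, G ω ∂(P θ)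
        = ∫⁻ ω, (n.factorial : ℝ≥0∞)⁻¹ *
            ∑ π : Equiv.Perm (Fin n), E (fun i => X ω (π i)) ∂(P θ) := lintegral_congr hG
      _ = (n.factorial : ℝ≥0∞)⁻¹ *
            ∫⁻ ω, ∑ π : Equiv.Perm (Fin n), E (fun i => X ω (π i)) ∂(P θ) :=
          lintegral_const_mul _ (Finset.measurable_sum _ fun π _ => hE.comp (hXπ π))
      _ = (n.factorial : ℝ≥0∞)⁻¹ *
            ∑ π : Equiv.Perm (Fin n), ∫⁻ ω, E (fun i => X ω (π i)) ∂(P θ) := by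
          rw [lintegral_finset_sum (f := fun (π : Equiv.Perm (Fin n)) ω => E (fun i => X ω (π i))) _ (fun π _ => hE.comp (hXπ π))]
      _ = (n.factorial : ℝ≥0∞)⁻¹ * ((n.factorial : ℝ≥0∞) * ∫⁻ ω, E (X ω) ∂(P θ)) := by
          rw [Finset.sum_congr rfl fun π _ => hswap π, Finset.sum_const, Finset.card_univ,
            nsmul_eq_mul, hcard]
      _ = ∫⁻ ω, E (X ω) ∂(P θ) := by
          rw [← mul_assoc, ENNReal.inv_mul_cancel hfac0 hfactop, one_mul]
      _ ≤ 1 := hEval θ hθ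
  · intro θ hdE hdG
    have hφp : Measurable (fun v : Fin n → ℝ => erealPos (F (E v))) :=
      measurable_erealPos.comp (hFmeas.comp hE)
    have hφn : Measurable (fun v : Fin n → ℝ => erealPos (-(F (E v)))) :=
      measurable_erealPos.comp (continuous_neg.measurable.comp (hFmeas.comp hE))
    have hswap_p : ∀ π : Equiv.Perm (Fin n),
        ∫⁻ ω, erealPos (F (E (fun i => X ω (π i)))) ∂(P θ)
          = ∫⁻ ω, erealPos (F (E (X ω))) ∂(P θ) := fun π => by
      rw [← lintegral_map hφp (hXπ π), hexch θ π, lintegral_map hφp hX]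
    have hswap_n : ∀ π : Equiv.Perm (Fin n),
        ∫⁻ ω, erealPos (-(F (E (fun i => X ω (π i))))) ∂(P θ)
          = ∫⁻ ω, erealPos (-(F (E (X ω)))) ∂(P θ) := fun π => by
      rw [← lintegral_map hφn (hXπ π), hexch θ π, lintegral_map hφn hX]
    set Ap := ∫⁻ ω, erealPos (F (E (X ω))) ∂(P θ) with hAp
    set An := ∫⁻ ω, erealPos (-(F (E (X ω)))) ∂(P θ) with hAn
    set Bp := ∫⁻ ω, erealPos (F (G ω)) ∂(P θ) with hBp
    set Bn := ∫⁻ ω, erealPos (-(F (G ω))) ∂(P θ) with hBn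
    have hptw : ∀ ω, ∑ π : Equiv.Perm (Fin n), erealPos (F (E (fun i => X ω (π i)))) +
        (n.factorial : ℝ≥0∞) * erealPos (-(F (G ω))) ≤
        (n.factorial : ℝ≥0∞) * erealPos (F (G ω)) +
        ∑ π : Equiv.Perm (Fin n), erealPos (-(F (E (fun i => X ω (π i))))) := by
      intro ω
      have h := jensen_parts hF (fun π : Equiv.Perm (Fin n) => E (fun i => X ω (π i)))
      rw [hcard] at h
      rw [← hG ω] at h
      exact h
    have hint := lintegral_mono (μ := P θ) hptw
    have hmeas_sum_p : Measurable
        (fun ω => ∑ π : Equiv.Perm (Fin n), erealPos (F (E (fun i => X ω (π i))))) :=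
      Finset.measurable_sum _ fun π _ => hφp.comp (hXπ π)
    have hmeasBn : Measurable (fun ω => erealPos (-(F (G ω)))) :=
      measurable_erealPos.comp (continuous_neg.measurable.comp (hFmeas.comp hGmeas))
    have hmeasBp : Measurable (fun ω => erealPos (F (G ω))) :=
      measurable_erealPos.comp (hFmeas.comp hGmeas)
    have hL : ∫⁻ ω, (∑ π : Equiv.Perm (Fin n), erealPos (F (E (fun i => X ω (π i)))) +
        (n.factorial : ℝ≥0∞) * erealPos (-(F (G ω)))) ∂(P θ)
          = (n.factorial : ℝ≥0∞) * Ap + (n.factorial : ℝ≥0∞) * Bn := by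
      rw [lintegral_add_left hmeas_sum_p, lintegral_const_mul _ hmeasBn,
        lintegral_finset_sum (f := fun (π : Equiv.Perm (Fin n)) ω => erealPos (F (E (fun i => X ω (π i))))) _ (fun π _ => hφp.comp (hXπ π)),
        Finset.sum_congr rfl (fun π _ => hswap_p π), Finset.sum_const, Finset.card_univ,
        nsmul_eq_mul, hcard]
    have hR : ∫⁻ ω, ((n.factorial : ℝ≥0∞) * erealPos (F (G ω)) +
        ∑ π : Equiv.Perm (Fin n), erealPos (-(F (E (fun i => X ω (π i)))))) ∂(P θ)
          = (n.factorial : ℝ≥0∞) * Bp + (n.factorial : ℝ≥0∞) * An := by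
      rw [lintegral_add_left ((hmeasBp).const_mul _), lintegral_const_mul _ hmeasBp,
        lintegral_finset_sum (f := fun (π : Equiv.Perm (Fin n)) ω => erealPos (-(F (E (fun i => X ω (π i)))))) _ (fun π _ => hφn.comp (hXπ π)),
        Finset.sum_congr rfl (fun π _ => hswap_n π), Finset.sum_const, Finset.card_univ,
        nsmul_eq_mul, hcard]
    rw [hL, hR, ← mul_add, ← mul_add] at hint
    have key : Ap + Bn ≤ Bp + An :=
      (ENNReal.mul_le_mul_iff_right hfac0 hfactop).mp hint
    exact eexp_le_of_parts hdE hdG key
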